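/- Let n ≥ 4 be an even integer and let G be an n-vertex graph with σ(G) ≥ n − 2. Then at least one of the following holds: (i) G admits a perfect matching; (ii) G has an independent set of size n/2 + 1; (iii) there exists an odd integer t with 1 ≤ t ≤ n − 1 such that G is isomorphic to the disjoint union of the complete graphs K_t and K_{n−t}. -/

import Mathlib

open Finset
set_option linter.unusedSectionVars false

lemma even_card_of_inv {α : Type*} [DecidableEq α] (f : α → α) (hf : ∀ v, f (f v) = v)
    (s : Finset α) (hs : ∀ v ∈ s, f v ∈ s) (hne : ∀ v ∈ s, f v ≠ v) : Even s.card := by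
  classical
  induction s using Finset.strongInduction with
  | _ s ih =>
    rcases s.eq_empty_or_nonempty with rfl | ⟨v, hv⟩
    · simp
    · have hfv := hs v hv
      have hvne := hne v hv
      have hsub : (s.erase v).erase (f v) ⊂ s := by
        apply Finset.ssubset_of_subset_of_ssubset (Finset.erase_subset _ _)
        exact Finset.erase_ssubset hv
      have hcl : ∀ w ∈ (s.erase v).erase (f v), f w ∈ (s.erase v).erase (f v) := by
        intro w hw
        simp only [Finset.mem_erase] at hw ⊢
        refine ⟨?_, ?_, hs w hw.2.2⟩
        · intro h; apply hw.2.1; rw [← hf w, h, hf]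
        · intro h; apply hw.1; rw [← hf w, h]
      have hne' : ∀ w ∈ (s.erase v).erase (f v), f w ≠ w := fun w hw =>
        hne w (by simp only [Finset.mem_erase] at hw; exact hw.2.2)
      have := ih _ hsub hcl hne'
      have hcard : s.card = ((s.erase v).erase (f v)).card + 2 := by
        rw [Finset.card_erase_of_mem, Finset.card_erase_of_mem hv]
        · have : 1 ≤ s.card := Finset.card_pos.2 ⟨v, hv⟩
          have h2 : 2 ≤ s.card := by
            rcases Finset.one_lt_card.2 ⟨v, hv, f v, hfv, hvne.symm⟩ with h
            omega
          omega
        · exact Finset.mem_erase.2 ⟨hvne, hfv⟩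
      rw [hcard]
      rcases this with ⟨k, hk⟩; exact ⟨k+1, by omega⟩

section Matching
variable {n : ℕ} (G : SimpleGraph (Fin n)) [DecidableRel G.Adj]

def GValid (f : Fin n → Fin n) : Prop := (∀ v, f (f v) = v) ∧ (∀ v, f v ≠ v → G.Adj v (f v))

def mset (f : Fin n → Fin n) : Finset (Fin n) := Finset.univ.filter (fun v => f v ≠ v)

variable {G}

lemma aug1 {f : Fin n → Fin n} (hf : GValid G f) {x y : Fin n} (hx : f x = x) (hy : f y = y)
    (hxy : x ≠ y) (hadj : G.Adj x y) : ∃ g, GValid G g ∧ (mset f).card < (mset g).card := by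
  classical
  set g : Fin n → Fin n := fun v => if v = x then y else if v = y then x else f v with hg
  have hgx : g x = y := by simp [hg]
  have hgy : g y = x := by simp [hg, hxy.symm]
  have hgo : ∀ v, v ≠ x → v ≠ y → g v = f v := by intro v h1 h2; simp [hg, h1, h2]
  have hmem : ∀ v, f v = x → v = x := fun v h => by rw [← hf.1 v, h, hx]
  have hmem' : ∀ v, f v = y → v = y := fun v h => by rw [← hf.1 v, h, hy]
  refine ⟨g, ⟨?_, ?_⟩, ?_⟩
  · intro v
    by_cases h1 : v = x
    · rw [h1, hgx, hgy]
    by_cases h2 : v = y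
    · rw [h2, hgy, hgx]
    · rw [hgo v h1 h2, hgo (f v) (fun h => h1 (hmem v h)) (fun h => h2 (hmem' v h)), hf.1]
  · intro v hv
    by_cases h1 : v = x
    · rw [h1, hgx] at *; exact hadj
    by_cases h2 : v = y
    · rw [h2, hgy] at *; exact hadj.symm
    · rw [hgo v h1 h2] at *; exact hf.2 v hv
  · apply Finset.card_lt_card
    constructor
    · intro v hv
      simp only [mset, Finset.mem_filter, Finset.mem_univ, true_and] at hv ⊢
      by_cases h1 : v = x
      · exact absurd (h1 ▸ hx) hv
      by_cases h2 : v = y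
      · exact absurd (h2 ▸ hy) hv
      · rw [hgo v h1 h2]; exact hv
    · intro hsub
      have : x ∈ mset g := by
        simp only [mset, Finset.mem_filter, Finset.mem_univ, true_and, hgx]
        exact hxy.symm
      have := hsub this
      simp only [mset, Finset.mem_filter, Finset.mem_univ, true_and, hx] at this
      exact this rfl


lemma aug3 {f : Fin n → Fin n} (hf : GValid G f) {x y a : Fin n} (hx : f x = x) (hy : f y = y)
    (hxy : x ≠ y) (ha : f a ≠ a) (h1 : G.Adj x a) (h2 : G.Adj (f a) y) :
    ∃ g, GValid G g ∧ (mset f).card < (mset g).card := by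
  classical
  have hfb : f (f a) = a := hf.1 a
  have hax : a ≠ x := by rintro rfl; exact ha hx
  have hay : a ≠ y := by rintro rfl; exact ha hy
  have hbx : f a ≠ x := by
    intro h; have h2' := hf.1 a; rw [h, hx] at h2'; exact ha (h.trans h2')
  have hby : f a ≠ y := by
    intro h; have h2' := hf.1 a; rw [h, hy] at h2'; exact ha (h.trans h2')
  have hab : a ≠ f a := fun h => ha h.symm
  set g : Fin n → Fin n := fun v =>
    if v = x then a else if v = a then x else if v = f a then y else if v = y then f a else f v
    with hg
  have hgx : g x = a := by simp [hg, hax.symm, hbx.symm, hxy]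
  have hga : g a = x := by simp [hg, hax]
  have hgb : g (f a) = y := by simp [hg, hbx, hab.symm]
  have hgy : g y = f a := by simp [hg, hxy.symm, hay.symm, hby.symm]
  have hgo : ∀ v, v ≠ x → v ≠ a → v ≠ f a → v ≠ y → g v = f v := by
    intro v e1 e2 e3 e4; simp [hg, e1, e2, e3, e4]
  have hmx : ∀ v, f v = x → v = x := fun v h => by rw [← hf.1 v, h, hx]
  have hmy : ∀ v, f v = y → v = y := fun v h => by rw [← hf.1 v, h, hy]
  have hma : ∀ v, f v = a → v = f a := fun v h => by rw [← hf.1 v, h]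
  have hmb : ∀ v, f v = f a → v = a := fun v h => by rw [← hf.1 v, h, hfb]
  refine ⟨g, ⟨?_, ?_⟩, ?_⟩
  · intro v
    by_cases e1 : v = x; · rw [e1, hgx, hga]
    by_cases e2 : v = a; · rw [e2, hga, hgx]
    by_cases e3 : v = f a; · rw [e3, hgb, hgy]
    by_cases e4 : v = y; · rw [e4, hgy, hgb]
    rw [hgo v e1 e2 e3 e4,
      hgo (f v) (fun h => e1 (hmx v h)) (fun h => e3 (hma v h))
        (fun h => e2 (hmb v h)) (fun h => e4 (hmy v h)), hf.1]
  · intro v hv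
    by_cases e1 : v = x; · rw [e1, hgx] at *; exact h1
    by_cases e2 : v = a; · rw [e2, hga] at *; exact h1.symm
    by_cases e3 : v = f a; · rw [e3, hgb] at *; exact h2
    by_cases e4 : v = y; · rw [e4, hgy] at *; exact h2.symm
    rw [hgo v e1 e2 e3 e4] at *; exact hf.2 v hv
  · apply Finset.card_lt_card
    constructor
    · intro v hv
      simp only [mset, Finset.mem_filter, Finset.mem_univ, true_and] at hv ⊢
      by_cases e1 : v = x; · exact absurd (e1 ▸ hx) hv
      by_cases e4 : v = y; · exact absurd (e4 ▸ hy) hv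
      by_cases e2 : v = a; · rw [e2, hga]; exact hax.symm
      by_cases e3 : v = f a; · rw [e3, hgb]; exact hby.symm
      rw [hgo v e1 e2 e3 e4]; exact hv
    · intro hsub
      have : x ∈ mset g := by
        simp only [mset, Finset.mem_filter, Finset.mem_univ, true_and, hgx]
        exact hax
      have := hsub this
      simp only [mset, Finset.mem_filter, Finset.mem_univ, true_and, hx] at this
      exact this rfl

lemma aug5 {f : Fin n → Fin n} (hf : GValid G f) {x y a c : Fin n} (hx : f x = x) (hy : f y = y)
    (hxy : x ≠ y) (ha : f a ≠ a) (hc : f c ≠ c) (hca : c ≠ a) (hcb : c ≠ f a)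
    (h1 : G.Adj x a) (h2 : G.Adj (f a) c) (h3 : G.Adj (f c) y) :
    ∃ g, GValid G g ∧ (mset f).card < (mset g).card := by
  classical
  have hfb : f (f a) = a := hf.1 a
  have hfd : f (f c) = c := hf.1 c
  have hax : a ≠ x := by rintro rfl; exact ha hx
  have hay : a ≠ y := by rintro rfl; exact ha hy
  have hbx : f a ≠ x := by
    intro h; have h2' := hf.1 a; rw [h, hx] at h2'; exact ha (h.trans h2')
  have hby : f a ≠ y := by
    intro h; have h2' := hf.1 a; rw [h, hy] at h2'; exact ha (h.trans h2')
  have hcx : c ≠ x := by rintro rfl; exact hc hx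
  have hcy : c ≠ y := by rintro rfl; exact hc hy
  have hdx : f c ≠ x := by
    intro h; have h2' := hf.1 c; rw [h, hx] at h2'; exact hc (h.trans h2')
  have hdy : f c ≠ y := by
    intro h; have h2' := hf.1 c; rw [h, hy] at h2'; exact hc (h.trans h2')
  have hab : a ≠ f a := fun h => ha h.symm
  have hcd : c ≠ f c := fun h => hc h.symm
  have hda : f c ≠ a := by intro h; apply hcb; rw [← hfd, h]
  have hdb : f c ≠ f a := by intro h; apply hca; rw [← hfd, h, hfb]
  set g : Fin n → Fin n := fun v =>
    if v = x then a else if v = a then x else if v = f a then c else if v = c then f a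
    else if v = f c then y else if v = y then f c else f v with hg
  have hgx : g x = a := by
    simp [hg, hax.symm, hbx.symm, hcx.symm, hdx.symm, hxy]
  have hga : g a = x := by simp [hg, hax]
  have hgb : g (f a) = c := by simp [hg, hbx, hab.symm]
  have hgc : g c = f a := by simp [hg, hcx, hca, hcb]
  have hgd : g (f c) = y := by simp [hg, hdx, hda, hdb, hcd.symm]
  have hgy : g y = f c := by
    simp [hg, hxy.symm, hay.symm, hby.symm, hcy.symm, hdy.symm]
  have hgo : ∀ v, v ≠ x → v ≠ a → v ≠ f a → v ≠ c → v ≠ f c → v ≠ y → g v = f v := by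
    intro v e1 e2 e3 e4 e5 e6; simp [hg, e1, e2, e3, e4, e5, e6]
  have hmx : ∀ v, f v = x → v = x := fun v h => by rw [← hf.1 v, h, hx]
  have hmy : ∀ v, f v = y → v = y := fun v h => by rw [← hf.1 v, h, hy]
  have hma : ∀ v, f v = a → v = f a := fun v h => by rw [← hf.1 v, h]
  have hmb : ∀ v, f v = f a → v = a := fun v h => by rw [← hf.1 v, h, hfb]
  have hmc : ∀ v, f v = c → v = f c := fun v h => by rw [← hf.1 v, h]
  have hmd : ∀ v, f v = f c → v = c := fun v h => by rw [← hf.1 v, h, hfd]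
  refine ⟨g, ⟨?_, ?_⟩, ?_⟩
  · intro v
    by_cases e1 : v = x; · rw [e1, hgx, hga]
    by_cases e2 : v = a; · rw [e2, hga, hgx]
    by_cases e3 : v = f a; · rw [e3, hgb, hgc]
    by_cases e4 : v = c; · rw [e4, hgc, hgb]
    by_cases e5 : v = f c; · rw [e5, hgd, hgy]
    by_cases e6 : v = y; · rw [e6, hgy, hgd]
    rw [hgo v e1 e2 e3 e4 e5 e6,
      hgo (f v) (fun h => e1 (hmx v h)) (fun h => e3 (hma v h)) (fun h => e2 (hmb v h))
        (fun h => e5 (hmc v h)) (fun h => e4 (hmd v h)) (fun h => e6 (hmy v h)), hf.1]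
  · intro v hv
    by_cases e1 : v = x; · rw [e1, hgx] at *; exact h1
    by_cases e2 : v = a; · rw [e2, hga] at *; exact h1.symm
    by_cases e3 : v = f a; · rw [e3, hgb] at *; exact h2
    by_cases e4 : v = c; · rw [e4, hgc] at *; exact h2.symm
    by_cases e5 : v = f c; · rw [e5, hgd] at *; exact h3
    by_cases e6 : v = y; · rw [e6, hgy] at *; exact h3.symm
    rw [hgo v e1 e2 e3 e4 e5 e6] at *; exact hf.2 v hv
  · apply Finset.card_lt_card
    constructor
    · intro v hv
      simp only [mset, Finset.mem_filter, Finset.mem_univ, true_and] at hv ⊢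
      by_cases e1 : v = x; · exact absurd (e1 ▸ hx) hv
      by_cases e6 : v = y; · exact absurd (e6 ▸ hy) hv
      by_cases e2 : v = a; · rw [e2, hga]; exact hax.symm
      by_cases e3 : v = f a; · rw [e3, hgb]; exact fun h => hcb h
      by_cases e4 : v = c; · rw [e4, hgc]; exact fun h => hcb h.symm
      by_cases e5 : v = f c; · rw [e5, hgd]; exact hdy.symm
      rw [hgo v e1 e2 e3 e4 e5 e6]; exact hv
    · intro hsub
      have : x ∈ mset g := by
        simp only [mset, Finset.mem_filter, Finset.mem_univ, true_and, hgx]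
        exact hax
      have := hsub this
      simp only [mset, Finset.mem_filter, Finset.mem_univ, true_and, hx] at this
      exact this rfl

end Matching

/-- Let `n ≥ 4` be even and let `G` be an `n`-vertex graph with `σ(G) ≥ n - 2`. Then
(i) `G` admits a perfect matching, or (ii) `G` has an independent set of size `n/2 + 1`,
or (iii) there is an odd `t` with `1 ≤ t ≤ n - 1` such that `G` is isomorphic to the
disjoint union `K_t ∪ K_{n-t}` — i.e. there is a `t`-element vertex set `C` such that two
distinct vertices are adjacent exactly when they lie on the same side of `{C, Cᶜ}`. -/
theorem statement18 (n : ℕ) (hn : 4 ≤ n) (heven : Even n)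
    (G : SimpleGraph (Fin n)) [DecidableRel G.Adj]
    (hσ : ∀ x y : Fin n, x ≠ y → ¬ G.Adj x y → n ≤ G.degree x + G.degree y + 2) :
    (∃ M : G.Subgraph, M.IsPerfectMatching) ∨
    (∃ S : Finset (Fin n), S.card = n / 2 + 1 ∧ ∀ u ∈ S, ∀ v ∈ S, ¬ G.Adj u v) ∨
    (∃ (t : ℕ) (C : Finset (Fin n)), Odd t ∧ 1 ≤ t ∧ t ≤ n - 1 ∧ C.card = t ∧
      ∀ u v : Fin n, G.Adj u v ↔ (u ≠ v ∧ (u ∈ C ↔ v ∈ C))) := by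
  classical
  -- obtain a maximum matching
  obtain ⟨f, hf, hmax⟩ : ∃ f, GValid G f ∧ ∀ g, GValid G g → (mset g).card ≤ (mset f).card := by
    have h0 : (Finset.univ.filter (fun f : Fin n → Fin n => GValid G f)).Nonempty :=
      ⟨id, Finset.mem_filter.2 ⟨Finset.mem_univ _, fun v => rfl, fun v hv => absurd rfl hv⟩⟩
    obtain ⟨f, hfmem, hmax⟩ := Finset.exists_max_image _ (fun f => (mset f).card) h0
    exact ⟨f, (Finset.mem_filter.1 hfmem).2,
      fun g hg => hmax g (Finset.mem_filter.2 ⟨Finset.mem_univ _, hg⟩)⟩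
  by_cases hall : ∀ v, f v ≠ v
  · -- perfect matching
    left
    refine ⟨⟨Set.univ, fun u v => f u = v ∧ G.Adj u v, fun h => h.2, fun _ => Set.mem_univ _,
      ⟨fun u v h => ⟨by rw [← h.1, hf.1], h.2.symm⟩⟩⟩, fun v _ => ?_, fun v => Set.mem_univ _⟩
    exact ⟨f v, ⟨rfl, hf.2 v (hall v)⟩, fun w hw => hw.1.symm⟩
  push_neg at hall
  obtain ⟨x, hx⟩ := hall
  set M : Finset (Fin n) := mset f with hM
  have hMmem : ∀ v, v ∈ M ↔ f v ≠ v := by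
    intro v; simp [hM, mset]
  have hMcl : ∀ v ∈ M, f v ∈ M := by
    intro v hv
    rw [hMmem] at hv ⊢
    intro h
    have h2 := hf.1 v
    rw [h] at h2
    exact hv h2
  have hMeven : Even M.card :=
    even_card_of_inv f hf.1 M hMcl (fun v hv => (hMmem v).1 hv)
  have hinj : Function.Injective f := fun u v h => by rw [← hf.1 u, h, hf.1]
  -- facts from maximality
  have F1 : ∀ u v : Fin n, f u = u → f v = v → u ≠ v → ¬ G.Adj u v := by
    intro u v hu hv huv hadj
    obtain ⟨g, hg, hlt⟩ := aug1 hf hu hv huv hadj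
    exact absurd (hmax g hg) (not_le.2 hlt)
  have C1 : ∀ u v a : Fin n, f u = u → f v = v → u ≠ v → G.Adj u a → ¬ G.Adj (f a) v := by
    intro u v a hu hv huv h1 h2
    by_cases ha : f a = a
    · rw [ha] at h2
      exact F1 a v ha hv (G.ne_of_adj h2) h2
    · obtain ⟨g, hg, hlt⟩ := aug3 hf hu hv huv ha h1 h2
      exact absurd (hmax g hg) (not_le.2 hlt)
  have F5 : ∀ u v a c : Fin n, f u = u → f v = v → u ≠ v → f a ≠ a → f c ≠ c → c ≠ a →
      c ≠ f a → G.Adj u a → G.Adj (f a) c → G.Adj (f c) v → False := by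
    intro u v a c hu hv huv ha hc hca hcb h1 h2 h3
    obtain ⟨g, hg, hlt⟩ := aug5 hf hu hv huv ha hc hca hcb h1 h2 h3
    exact absurd (hmax g hg) (not_le.2 hlt)
  -- unmatched vertices
  have hUcard : M.card + (Finset.univ.filter (fun v => f v = v)).card = n := by
    have := Finset.card_filter_add_card_filter_not
      (s := (Finset.univ : Finset (Fin n))) (p := fun v => f v ≠ v)
    simp only [Finset.card_univ, Fintype.card_fin, not_not] at this
    rw [hM]
    convert this using 3
    ext v; simp [mset]
  have hU1 : 1 < (Finset.univ.filter (fun v => f v = v)).card := by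
    have hxU : x ∈ Finset.univ.filter (fun v => f v = v) := by simp [hx]
    have h1 : 1 ≤ (Finset.univ.filter (fun v => f v = v)).card :=
      Finset.card_pos.2 ⟨x, hxU⟩
    rcases Nat.lt_or_ge 1 (Finset.univ.filter (fun v => f v = v)).card with h | h
    · exact h
    · exfalso
      obtain ⟨k, hk⟩ := heven
      obtain ⟨m, hm⟩ := hMeven
      omega
  obtain ⟨y, hyU, hyx⟩ := Finset.exists_mem_ne hU1 x
  have hy : f y = y := (Finset.mem_filter.1 hyU).2
  have hxy : x ≠ y := hyx.symm
  -- degrees of unmatched vertices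
  have hdeg : ∀ u : Fin n, f u = u → G.degree u = (M.filter (fun v => G.Adj u v)).card := by
    intro u hu
    rw [← SimpleGraph.card_neighborFinset_eq_degree]
    congr 1
    ext v
    simp only [SimpleGraph.mem_neighborFinset, Finset.mem_filter, hMmem]
    constructor
    · intro h
      refine ⟨?_, h⟩
      intro hv
      exact F1 u v hu hv (G.ne_of_adj h) h
    · exact fun h => h.2
  set w : Fin n → ℕ :=
    fun v => (if G.Adj x v then 1 else 0) + (if G.Adj y v then 1 else 0) with hw
  have hsum_split : ∑ v ∈ M, w v = G.degree x + G.degree y := by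
    rw [hdeg x hx, hdeg y hy, hw]
    rw [Finset.sum_add_distrib]
    congr 1 <;> rw [Finset.sum_boole] <;> simp
  have hsum_f : ∑ v ∈ M, w (f v) = ∑ v ∈ M, w v :=
    Finset.sum_nbij' f f hMcl hMcl (fun a _ => hf.1 a) (fun a _ => hf.1 a) (fun a _ => rfl)
  -- pairwise bound
  have k1 : ∀ v, G.Adj x v → ¬ G.Adj y (f v) := by
    intro v h1 h2
    exact C1 x y v hx hy hxy h1 h2.symm
  have k2 : ∀ v, G.Adj y v → ¬ G.Adj x (f v) := by
    intro v h1 h2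
    exact C1 y x v hy hx hxy.symm h1 h2.symm
  have hpair_le : ∀ v ∈ M, w v + w (f v) ≤ 2 := by
    intro v _
    by_cases p1 : G.Adj x v <;> by_cases p2 : G.Adj y v <;>
      by_cases p3 : G.Adj x (f v) <;> by_cases p4 : G.Adj y (f v) <;>
      first
        | (exact absurd p4 (k1 v p1))
        | (exact absurd p3 (k2 v p2))
        | (simp [hw, p1, p2, p3, p4])
  have hMle : M.card + 2 ≤ n := by
    have hsub : insert x (insert y M) ⊆ Finset.univ := Finset.subset_univ _
    have hxM : x ∉ insert y M := by
      simp only [Finset.mem_insert, hMmem]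
      push_neg
      exact ⟨hxy, hx⟩
    have hyM : y ∉ M := fun h => (hMmem y).1 h hy
    have := Finset.card_le_card hsub
    rw [Finset.card_insert_of_notMem hxM, Finset.card_insert_of_notMem hyM] at this
    simp at this; omega
  have hdsum : n ≤ G.degree x + G.degree y + 2 := hσ x y hxy (F1 x y hx hy hxy)
  have h2S : 2 * (∑ v ∈ M, w v) ≤ 2 * M.card := by
    have : ∑ v ∈ M, (w v + w (f v)) ≤ ∑ _v ∈ M, 2 := Finset.sum_le_sum hpair_le
    rw [Finset.sum_add_distrib, hsum_f, Finset.sum_const, smul_eq_mul] at this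
    omega
  -- equalities
  have hScard : ∑ v ∈ M, w v = M.card := by omega
  have hMcard : M.card = n - 2 := by omega
  have hpair_eq : ∀ v ∈ M, w v + w (f v) = 2 := by
    by_contra hcon
    push_neg at hcon
    obtain ⟨v, hv, hne⟩ := hcon
    have hlt : ∑ v ∈ M, (w v + w (f v)) < ∑ _v ∈ M, 2 :=
      Finset.sum_lt_sum hpair_le ⟨v, hv, lt_of_le_of_ne (hpair_le v hv) hne⟩
    rw [Finset.sum_add_distrib, hsum_f, Finset.sum_const, smul_eq_mul] at hlt
    omega
  -- the only unmatched vertices are x and y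
  have hU2 : ∀ v : Fin n, f v = v → v = x ∨ v = y := by
    intro v hv
    by_contra hcon
    push_neg at hcon
    have hsub : insert v (insert x (insert y M)) ⊆ Finset.univ := Finset.subset_univ _
    have hvM : v ∉ insert x (insert y M) := by
      simp only [Finset.mem_insert, hMmem]
      push_neg
      exact ⟨hcon.1, hcon.2, hv⟩
    have hxM : x ∉ insert y M := by
      simp only [Finset.mem_insert, hMmem]
      push_neg
      exact ⟨hxy, hx⟩
    have hyM : y ∉ M := fun h => (hMmem y).1 h hy
    have := Finset.card_le_card hsub
    rw [Finset.card_insert_of_notMem hvM, Finset.card_insert_of_notMem hxM,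
      Finset.card_insert_of_notMem hyM] at this
    simp only [Finset.card_univ, Fintype.card_fin] at this
    omega
  set Rx : Finset (Fin n) := M.filter (fun v => G.Adj x v) with hRx
  set Ry : Finset (Fin n) := M.filter (fun v => G.Adj y v) with hRy
  set Inner : Finset (Fin n) := Rx ∩ Ry with hInnerDef
  have hInnermem : ∀ v, v ∈ Inner ↔ (v ∈ M ∧ G.Adj x v ∧ G.Adj y v) := by
    intro v
    simp only [hInnerDef, hRx, hRy, Finset.mem_inter, Finset.mem_filter]
    tauto
  have hdx : G.degree x = Rx.card := hdeg x hx
  have hdy : G.degree y = Ry.card := hdeg y hy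
  have hdxy : Rx.card + Ry.card = n - 2 := by
    rw [← hdx, ← hdy, ← hsum_split]
    omega
  by_cases hInner : Inner.Nonempty
  · -- Case 1: independent set of size n/2 + 1
    right; left
    have hclaim : ∀ a ∈ Inner, ∀ u, G.Adj (f a) u → u ∈ Inner := by
      intro a haI u hadj
      obtain ⟨haM, hxa, hya⟩ := (hInnermem a).1 haI
      have hfa : f a ≠ a := (hMmem a).1 haM
      have hbnx : ¬ G.Adj (f a) x := C1 y x a hy hx hxy.symm hya
      have hbny : ¬ G.Adj (f a) y := C1 x y a hx hy hxy hxa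
      have hux : u ≠ x := by rintro rfl; exact hbnx hadj
      have huy : u ≠ y := by rintro rfl; exact hbny hadj
      by_cases hua : u = a
      · exact hua ▸ haI
      have huM' : f u ≠ u := by
        intro h
        rcases hU2 u h with rfl | rfl
        · exact hux rfl
        · exact huy rfl
      have huM : u ∈ M := (hMmem u).2 huM'
      have hub : u ≠ f a := (G.ne_of_adj hadj).symm
      by_cases p4 : G.Adj y (f u)
      · exact (F5 x y a u hx hy hxy hfa huM' hua hub hxa hadj p4.symm).elim
      by_cases p3 : G.Adj x (f u)
      · exact (F5 y x a u hy hx hxy.symm hfa huM' hua hub hya hadj p3.symm).elim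
      have hpe := hpair_eq u huM
      by_cases p1 : G.Adj x u <;> by_cases p2 : G.Adj y u
      · exact (hInnermem u).2 ⟨huM, p1, p2⟩
      all_goals simp [hw, p1, p2, p3, p4] at hpe
    obtain ⟨a0, ha0⟩ := hInner
    obtain ⟨ha0M, hxa0, hya0⟩ := (hInnermem a0).1 ha0
    have hfa0M : f a0 ∈ M := hMcl _ ha0M
    have hdb : G.degree (f a0) ≤ Inner.card := by
      rw [← SimpleGraph.card_neighborFinset_eq_degree]
      apply Finset.card_le_card
      intro v hv
      exact hclaim a0 ha0 v (by simpa using hv)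
    have hxb : ¬ G.Adj x (f a0) := fun h => C1 y x a0 hy hx hxy.symm hya0 h.symm
    have hyb : ¬ G.Adj y (f a0) := fun h => C1 x y a0 hx hy hxy hxa0 h.symm
    have hxbne : x ≠ f a0 := by
      intro h
      rw [← h] at hfa0M
      exact (hMmem x).1 hfa0M hx
    have hybne : y ≠ f a0 := by
      intro h
      rw [← h] at hfa0M
      exact (hMmem y).1 hfa0M hy
    have hσbx := hσ x (f a0) hxbne hxb
    have hσby := hσ y (f a0) hybne hyb
    have hIRy : Inner ⊆ Ry := Finset.inter_subset_right
    have hIRx : Inner ⊆ Rx := Finset.inter_subset_left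
    have hIcardy : Inner.card ≤ Ry.card := Finset.card_le_card hIRy
    have hIcardx : Inner.card ≤ Rx.card := Finset.card_le_card hIRx
    have hRyEq : Inner = Ry := Finset.eq_of_subset_of_card_le hIRy (by omega)
    have hRxEq : Inner = Rx := Finset.eq_of_subset_of_card_le hIRx (by omega)
    have hIcard : 2 * Inner.card = n - 2 := by
      rw [hRxEq, hRyEq] at *
      omega
    refine ⟨insert x (insert y (Inner.image f)), ?_, ?_⟩
    · have himg : (Inner.image f).card = Inner.card := Finset.card_image_of_injective _ hinj
      have hyimg : y ∉ Inner.image f := by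
        intro h
        obtain ⟨a, haI, hfa⟩ := Finset.mem_image.1 h
        have : a = y := hinj (by rw [hfa, hy])
        subst this
        exact (hMmem a).1 ((hInnermem a).1 haI).1 hy
      have hximg : x ∉ insert y (Inner.image f) := by
        simp only [Finset.mem_insert]
        push_neg
        refine ⟨hxy, ?_⟩
        intro h
        obtain ⟨a, haI, hfa⟩ := Finset.mem_image.1 h
        have : a = x := hinj (by rw [hfa, hx])
        subst this
        exact (hMmem a).1 ((hInnermem a).1 haI).1 hx
      rw [Finset.card_insert_of_notMem hximg, Finset.card_insert_of_notMem hyimg, himg]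
      obtain ⟨k, hk⟩ := heven
      omega
    · intro u hu v hv hadj
      simp only [Finset.mem_insert, Finset.mem_image] at hu hv
      have hmemadj : ∀ a ∈ Inner, ∀ b ∈ Inner, ¬ G.Adj (f a) (f b) := by
        intro a haI b hbI h
        have hbI' := hclaim a haI (f b) h
        obtain ⟨_, hxfb, _⟩ := (hInnermem (f b)).1 hbI'
        obtain ⟨hbM, hxb', hyb'⟩ := (hInnermem b).1 hbI
        exact C1 y x b hy hx hxy.symm hyb' hxfb.symm
      rcases hu with hu | hu | ⟨a, haI, hua⟩ <;> rcases hv with hv | hv | ⟨b, hbI, hvb⟩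
      · rw [hu, hv] at hadj; exact G.ne_of_adj hadj rfl
      · rw [hu, hv] at hadj; exact F1 x y hx hy hxy hadj
      · rw [hu, ← hvb] at hadj
        obtain ⟨hbM, hxb', hyb'⟩ := (hInnermem b).1 hbI
        exact C1 y x b hy hx hxy.symm hyb' hadj.symm
      · rw [hu, hv] at hadj; exact F1 x y hx hy hxy hadj.symm
      · rw [hu, hv] at hadj; exact G.ne_of_adj hadj rfl
      · rw [hu, ← hvb] at hadj
        obtain ⟨hbM, hxb', hyb'⟩ := (hInnermem b).1 hbI
        exact C1 x y b hx hy hxy hxb' hadj.symm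
      · rw [← hua, hv] at hadj
        obtain ⟨haM, hxa', hya'⟩ := (hInnermem a).1 haI
        exact C1 y x a hy hx hxy.symm hya' hadj
      · rw [← hua, hv] at hadj
        obtain ⟨haM, hxa', hya'⟩ := (hInnermem a).1 haI
        exact C1 x y a hx hy hxy hxa' hadj
      · rw [← hua, ← hvb] at hadj
        exact hmemadj a haI b hbI hadj
  · -- Case 2: two cliques
    right; right
    have hIe : ∀ v ∈ M, ¬ (G.Adj x v ∧ G.Adj y v) := by
      intro v hv hc
      exact hInner ⟨v, (hInnermem v).2 ⟨hv, hc.1, hc.2⟩⟩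
    have hone : ∀ v ∈ M, (G.Adj x v ∧ G.Adj x (f v) ∧ ¬G.Adj y v ∧ ¬G.Adj y (f v)) ∨
        (G.Adj y v ∧ G.Adj y (f v) ∧ ¬G.Adj x v ∧ ¬G.Adj x (f v)) := by
      intro v hv
      have hpe := hpair_eq v hv
      have h1 := hIe v hv
      have h2 := hIe (f v) (hMcl v hv)
      by_cases p1 : G.Adj x v <;> by_cases p2 : G.Adj y v <;>
        by_cases p3 : G.Adj x (f v) <;> by_cases p4 : G.Adj y (f v) <;>
        first
          | (exact Or.inl ⟨p1, p3, p2, p4⟩)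
          | (exact Or.inr ⟨p2, p4, p1, p3⟩)
          | (exact (h1 ⟨p1, p2⟩).elim)
          | (exact (h2 ⟨p3, p4⟩).elim)
          | (exact (k1 v p1 p4).elim)
          | (exact (k2 v p2 p3).elim)
          | (simp [hw, p1, p2, p3, p4] at hpe)
    have hcross : ∀ u ∈ M, G.Adj x u → ∀ v ∈ M, G.Adj y v → ¬ G.Adj u v := by
      intro u huM hxu v hvM hyv huv
      have hfuM : f u ∈ M := hMcl u huM
      rcases hone u huM with ⟨_, hxfu, hyu, _⟩ | ⟨_, _, hxu', _⟩
      swap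
      · exact hxu' hxu
      rcases hone v hvM with ⟨hxv, _, _, _⟩ | ⟨_, hyfv, _, _⟩
      · exact hIe v hvM ⟨hxv, hyv⟩
      exact F5 x y (f u) v hx hy hxy
        (by rw [hf.1]; exact fun h => (hMmem u).1 huM h.symm)
        ((hMmem v).1 hvM)
        (fun h => hIe (f u) hfuM ⟨hxfu, by rw [← h]; exact hyv⟩)
        (by rw [hf.1]; exact fun h => hIe u huM ⟨hxu, by rw [← h]; exact hyv⟩)
        hxfu (by rw [hf.1]; exact huv) hyfv.symm
    have hxnotRx : x ∉ Rx := fun h => (hMmem x).1 (Finset.mem_filter.1 h).1 hx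
    have hynotRy : y ∉ Ry := fun h => (hMmem y).1 (Finset.mem_filter.1 h).1 hy
    have hsideX : ∀ u ∈ M, G.Adj x u → ∀ v ∈ insert x Rx, v ≠ u → G.Adj u v := by
      intro u huM hxu
      rcases hone u huM with ⟨_, _, hyu, _⟩ | ⟨_, _, hxu', _⟩
      swap
      · exact absurd hxu hxu'
      have hnbr : G.neighborFinset u ⊆ (insert x Rx).erase u := by
        intro v hv
        rw [SimpleGraph.mem_neighborFinset] at hv
        refine Finset.mem_erase.2 ⟨(G.ne_of_adj hv).symm, ?_⟩
        by_cases hvx : v = x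
        · rw [hvx]; exact Finset.mem_insert_self _ _
        have hvy : v ≠ y := fun h => hyu (h ▸ hv.symm)
        have hvM : v ∈ M := by
          rw [hMmem]
          intro h
          rcases hU2 v h with h' | h'
          · exact hvx h'
          · exact hvy h'
        rcases hone v hvM with ⟨hxv, _, _, _⟩ | ⟨hyv, _, _, _⟩
        · exact Finset.mem_insert_of_mem (Finset.mem_filter.2 ⟨hvM, hxv⟩)
        · exact absurd hv (hcross u huM hxu v hvM hyv)
      have huRx : u ∈ insert x Rx :=
        Finset.mem_insert_of_mem (Finset.mem_filter.2 ⟨huM, hxu⟩)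
      have hcard2 : ((insert x Rx).erase u).card = Rx.card := by
        rw [Finset.card_erase_of_mem huRx, Finset.card_insert_of_notMem hxnotRx]
        omega
      have huy : u ≠ y := fun h => (hMmem y).1 (h ▸ huM) hy
      have hnadj : ¬ G.Adj u y := fun h => hyu h.symm
      have hdu := hσ u y huy hnadj
      rw [hdy] at hdu
      have hdu2 : Rx.card ≤ G.degree u := by omega
      have heqN : G.neighborFinset u = (insert x Rx).erase u :=
        Finset.eq_of_subset_of_card_le hnbr (by
          rw [hcard2, SimpleGraph.card_neighborFinset_eq_degree]; exact hdu2)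
      intro v hv hvu
      have hm : v ∈ G.neighborFinset u := by
        rw [heqN]
        exact Finset.mem_erase.2 ⟨hvu, hv⟩
      simpa using hm
    have hcrossY : ∀ u ∈ M, G.Adj y u → ∀ v ∈ M, G.Adj x v → ¬ G.Adj u v :=
      fun u huM hyu v hvM hxv h => hcross v hvM hxv u huM hyu h.symm
    have hsideY : ∀ u ∈ M, G.Adj y u → ∀ v ∈ insert y Ry, v ≠ u → G.Adj u v := by
      intro u huM hyu
      rcases hone u huM with ⟨_, _, hyu', _⟩ | ⟨_, _, hxu, _⟩
      · exact absurd hyu hyu'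
      have hnbr : G.neighborFinset u ⊆ (insert y Ry).erase u := by
        intro v hv
        rw [SimpleGraph.mem_neighborFinset] at hv
        refine Finset.mem_erase.2 ⟨(G.ne_of_adj hv).symm, ?_⟩
        by_cases hvy : v = y
        · rw [hvy]; exact Finset.mem_insert_self _ _
        have hvx : v ≠ x := fun h => hxu (h ▸ hv.symm)
        have hvM : v ∈ M := by
          rw [hMmem]
          intro h
          rcases hU2 v h with h' | h'
          · exact hvx h'
          · exact hvy h'
        rcases hone v hvM with ⟨hxv, _, _, _⟩ | ⟨hyv, _, _, _⟩
        · exact absurd hv (hcrossY u huM hyu v hvM hxv)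
        · exact Finset.mem_insert_of_mem (Finset.mem_filter.2 ⟨hvM, hyv⟩)
      have huRy : u ∈ insert y Ry :=
        Finset.mem_insert_of_mem (Finset.mem_filter.2 ⟨huM, hyu⟩)
      have hcard2 : ((insert y Ry).erase u).card = Ry.card := by
        rw [Finset.card_erase_of_mem huRy, Finset.card_insert_of_notMem hynotRy]
        omega
      have hux : u ≠ x := fun h => (hMmem x).1 (h ▸ huM) hx
      have hnadj : ¬ G.Adj u x := fun h => hxu h.symm
      have hdu := hσ u x hux hnadj
      rw [hdx] at hdu
      have hdu2 : Ry.card ≤ G.degree u := by omega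
      have heqN : G.neighborFinset u = (insert y Ry).erase u :=
        Finset.eq_of_subset_of_card_le hnbr (by
          rw [hcard2, SimpleGraph.card_neighborFinset_eq_degree]; exact hdu2)
      intro v hv hvu
      have hm : v ∈ G.neighborFinset u := by
        rw [heqN]
        exact Finset.mem_erase.2 ⟨hvu, hv⟩
      simpa using hm
    have hpart : ∀ z : Fin n, z ∉ insert x Rx → z = y ∨ (z ∈ M ∧ G.Adj y z) := by
      intro z hz
      by_cases hfz : f z = z
      · rcases hU2 z hfz with h | h
        · exact absurd (h ▸ Finset.mem_insert_self x Rx) hz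
        · exact Or.inl h
      · have hzM : z ∈ M := (hMmem z).2 hfz
        rcases hone z hzM with ⟨hxz, _, _, _⟩ | ⟨hyz, _, _, _⟩
        · exact absurd (Finset.mem_insert_of_mem (Finset.mem_filter.2 ⟨hzM, hxz⟩)) hz
        · exact Or.inr ⟨hzM, hyz⟩
    have hRxcl : ∀ v ∈ Rx, f v ∈ Rx := by
      intro v hv
      obtain ⟨hvM, hxv⟩ := Finset.mem_filter.1 hv
      rcases hone v hvM with ⟨_, hxfv, _, _⟩ | ⟨_, _, hxv', _⟩
      · exact Finset.mem_filter.2 ⟨hMcl v hvM, hxfv⟩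
      · exact absurd hxv hxv'
    have hRxeven : Even Rx.card :=
      even_card_of_inv f hf.1 Rx hRxcl
        (fun v hv => (hMmem v).1 (Finset.mem_filter.1 hv).1)
    refine ⟨Rx.card + 1, insert x Rx, hRxeven.add_one, by omega, ?_,
      by rw [Finset.card_insert_of_notMem hxnotRx], ?_⟩
    · -- t ≤ n - 1
      have hyC : y ∉ insert x Rx := by
        simp only [Finset.mem_insert]
        push_neg
        exact ⟨hxy.symm, fun h => (hMmem y).1 (Finset.mem_filter.1 h).1 hy⟩
      have hsub : insert y (insert x Rx) ⊆ Finset.univ := Finset.subset_univ _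
      have := Finset.card_le_card hsub
      rw [Finset.card_insert_of_notMem hyC, Finset.card_insert_of_notMem hxnotRx] at this
      simp only [Finset.card_univ, Fintype.card_fin] at this
      omega
    · intro u v
      constructor
      · intro hadj
        refine ⟨G.ne_of_adj hadj, ?_⟩
        have key : ∀ p q : Fin n, G.Adj p q → p ∈ insert x Rx → q ∈ insert x Rx := by
          intro p q hpq hp
          by_contra hq
          rcases hpart q hq with hqy | ⟨hqM, hyq⟩
          · rw [hqy] at hpq
            rcases Finset.mem_insert.1 hp with hpx | hpRx
            · rw [hpx] at hpq; exact F1 x y hx hy hxy hpq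
            · obtain ⟨hpM, hxp⟩ := Finset.mem_filter.1 hpRx
              rcases hone p hpM with ⟨_, _, hyp', _⟩ | ⟨_, _, hxp', _⟩
              · exact hyp' hpq.symm
              · exact hxp' hxp
          · rcases Finset.mem_insert.1 hp with hpx | hpRx
            · rw [hpx] at hpq
              exact hq (Finset.mem_insert_of_mem (Finset.mem_filter.2 ⟨hqM, hpq⟩))
            · obtain ⟨hpM, hxp⟩ := Finset.mem_filter.1 hpRx
              exact hcross p hpM hxp q hqM hyq hpq
        exact ⟨key u v hadj, key v u hadj.symm⟩
      · rintro ⟨hne, hiff⟩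
        by_cases hu : u ∈ insert x Rx
        · have hv := hiff.1 hu
          rcases Finset.mem_insert.1 hu with hux | huRx
          · rcases Finset.mem_insert.1 hv with hvx | hvRx
            · exact absurd (hux.trans hvx.symm) hne
            · rw [hux]; exact (Finset.mem_filter.1 hvRx).2
          · obtain ⟨huM, hxu⟩ := Finset.mem_filter.1 huRx
            exact hsideX u huM hxu v hv hne.symm
        · have hv : v ∉ insert x Rx := fun h => hu (hiff.2 h)
          rcases hpart u hu with huy | ⟨huM, hyu⟩
          · rcases hpart v hv with hvy | ⟨hvM, hyv⟩
            · exact absurd (huy.trans hvy.symm) hne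
            · rw [huy]; exact hyv
          · rcases hpart v hv with hvy | ⟨hvM, hyv⟩
            · rw [hvy]; exact hyu.symm
            · exact hsideY u huM hyu v
                (Finset.mem_insert_of_mem (Finset.mem_filter.2 ⟨hvM, hyv⟩)) hne.symm
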